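/- Let $\mathbf{c}, \mu \in \mathbb{R}^d$ with $\|\mu - \mathbf{c}\| \geq 4 r_0$ for some $r_0 > 0$, and let $\mathbf{g}$ be a unit vector and $d$ a real number satisfying $d \geq \|\mu - \mathbf{c}\| - r_0$ and such that there exists an index $j$ with $\langle \mathbf{Q}_j - \mathbf{c}, \mathbf{g}\rangle \geq d$ and $\langle \mathbf{Q}_j - \mu, \mathbf{g}\rangle \leq r_0$. Then $\left\langle \mathbf{g}, \frac{\mu - \mathbf{c}}{\|\mu - \mathbf{c}\|}\right\rangle \geq \frac{1}{2}$. -/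

import Mathlib

/-- Gradient-direction estimate: if `‖μ - c‖ ≥ 4 r₀`, `g` is a unit vector,
`dist ≥ ‖μ - c‖ - r₀`, and some point `Q_j` satisfies `⟪Q_j - c, g⟫ ≥ dist` and
`⟪Q_j - μ, g⟫ ≤ r₀`, then `⟪g, (μ - c)/‖μ - c‖⟫ ≥ 1/2`. -/
theorem stmt10 {d k : ℕ} (c μv g : EuclideanSpace ℝ (Fin d)) (r₀ dst : ℝ) (hr₀ : 0 < r₀)
    (hfar : 4 * r₀ ≤ ‖μv - c‖) (hg : ‖g‖ = 1) (hd : ‖μv - c‖ - r₀ ≤ dst)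
    (Q : Fin k → EuclideanSpace ℝ (Fin d))
    (hj : ∃ j, dst ≤ (inner ℝ (Q j - c) g : ℝ) ∧ (inner ℝ (Q j - μv) g : ℝ) ≤ r₀) :
    (1 : ℝ) / 2 ≤ (inner ℝ g ((‖μv - c‖)⁻¹ • (μv - c)) : ℝ) := by
  obtain ⟨j, h1, h2⟩ := hj
  have hpos : 0 < ‖μv - c‖ := lt_of_lt_of_le (by linarith) hfar
  have key : ‖μv - c‖ - 2 * r₀ ≤ (inner ℝ (μv - c) g : ℝ) := by
    have : (inner ℝ (μv - c) g : ℝ) = inner ℝ (Q j - c) g - inner ℝ (Q j - μv) g := by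
      rw [← inner_sub_left]; congr 1; abel
    rw [this]; linarith
  rw [real_inner_comm, real_inner_smul_left]
  rw [inv_mul_eq_div, le_div_iff₀ hpos]
  nlinarith
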